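/- Let $a>0$, $m\in\{1,2\}$, $\beta\in(-m,0)$, $\mu=\beta/m$, $\xi_{\mathrm w}=-\frac{am}{m+\beta}$. Suppose $U:(-\infty,\xi_{\mathrm w})\to\mathbb{R}$ is differentiable, satisfies $\big((U(\xi)-\xi)^2-a^2\big)U'(\xi)=a^2\big(\beta+\tfrac{mU(\xi)}{\xi}\big)$ for all $\xi<\xi_{\mathrm w}$, and $U(\xi)>-\mu\xi$ for all $\xi<\xi_{\mathrm w}$. Then the limit $\lim_{\xi\to-\infty}U(\xi)$ exists and is finite. -/

import Mathlib

set_option maxHeartbeats 1000000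

/-- Any solution of the similarity ODE whose graph lies in the region
`𝒰 = {ξ < ξ_w, U > -μξ}` tends to a finite limit as `ξ → -∞`. -/
theorem finite_limit_at_minus_infinity
    (a : ℝ) (ha : 0 < a) (m : ℕ) (hm : m = 1 ∨ m = 2)
    (β : ℝ) (hβ : β ∈ Set.Ioo (-(m : ℝ)) 0)
    (μ : ℝ) (hμ : μ = β / m)
    (ξw : ℝ) (hξw : ξw = -(a * m) / (m + β))
    (U : ℝ → ℝ)
    (hdiff : ∀ ξ < ξw, DifferentiableAt ℝ U ξ)
    (hode : ∀ ξ < ξw, ((U ξ - ξ) ^ 2 - a ^ 2) * deriv U ξ = a ^ 2 * (β + m * U ξ / ξ))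
    (hreg : ∀ ξ < ξw, -μ * ξ < U ξ) :
    ∃ L : ℝ, Filter.Tendsto U Filter.atBot (nhds L) := by
  obtain ⟨hβ1, hβ2⟩ := hβ
  have hm0 : (0:ℝ) < m := by rcases hm with h | h <;> simp [h]
  have hmβ : 0 < (m:ℝ) + β := by linarith
  have hμeq : 1 + μ = ((m:ℝ) + β) / m := by rw [hμ]; field_simp
  have h1μ : 0 < 1 + μ := by rw [hμeq]; positivity
  have hμ0 : μ < 0 := by rw [hμ]; exact div_neg_of_neg_of_pos hβ2 hm0
  have hmμ : (m:ℝ) * μ = β := by rw [hμ]; field_simp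
  have hξw0 : ξw < 0 := by
    rw [hξw]
    exact div_neg_of_neg_of_pos (neg_lt_zero.mpr (by positivity)) hmβ
  have hid : (1 + μ) * ξw = -a := by
    rw [hμeq, hξw]; field_simp
  -- For ξ < ξw, U ξ - ξ > a
  have hkey : ∀ ξ < ξw, a < U ξ - ξ := by
    intro ξ hξ
    have h1 := hreg ξ hξ
    have h2 : 0 < (1 + μ) * (ξw - ξ) := mul_pos h1μ (sub_pos.2 hξ)
    linarith [hid, h1, h2]
  have hD : ∀ ξ < ξw, 0 < (U ξ - ξ)^2 - a^2 := by
    intro ξ hξ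
    have h1 := hkey ξ hξ
    have h2 : a * a < (U ξ - ξ) * (U ξ - ξ) := mul_lt_mul h1 h1.le ha (by linarith)
    linarith [h2]
  have hN : ∀ ξ < ξw, β + (m:ℝ) * U ξ / ξ < 0 := by
    intro ξ hξ
    have hξ0 : ξ < 0 := lt_trans hξ hξw0
    have h1 := hreg ξ hξ
    have h1' := mul_lt_mul_of_pos_left h1 hm0
    have h2 : (m:ℝ) * μ * ξ = β * ξ := by rw [hmμ]
    have h3 : (m:ℝ) * U ξ / ξ < -β := by
      rw [div_lt_iff_of_neg hξ0]; linarith [h1', h2]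
    linarith
  have hderiv_eq : ∀ ξ < ξw,
      deriv U ξ = a ^ 2 * (β + m * U ξ / ξ) / ((U ξ - ξ) ^ 2 - a ^ 2) := by
    intro ξ hξ
    rw [eq_div_iff (hD ξ hξ).ne']
    rw [mul_comm]
    exact hode ξ hξ
  have hderiv_neg : ∀ ξ < ξw, deriv U ξ < 0 := by
    intro ξ hξ
    rw [hderiv_eq ξ hξ]
    exact div_neg_of_neg_of_pos
      (mul_neg_of_pos_of_neg (by positivity) (hN ξ hξ)) (hD ξ hξ)
  -- constants
  obtain ⟨C, hCdef⟩ : ∃ C : ℝ, C = 2 * a ^ 2 * ((m:ℝ) - β) / (1 + μ) ^ 2 := ⟨_, rfl⟩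
  have hC0 : 0 ≤ C := by
    rw [hCdef]
    exact div_nonneg (mul_nonneg (by positivity) (by linarith)) (by positivity)
  obtain ⟨ξ₀, hξ₀def⟩ : ∃ x : ℝ, x = min ξw (-(2 * a) / (1 + μ)) - 1 := ⟨_, rfl⟩
  have hξ₀w : ξ₀ < ξw := by
    have h1 : min ξw (-(2 * a) / (1 + μ)) ≤ ξw := min_le_left _ _
    rw [hξ₀def]; linarith
  have hξ₀0 : ξ₀ < 0 := lt_trans hξ₀w hξw0
  have hξ₀a : 2 * a ≤ (1 + μ) * (-ξ₀) := by
    have h1 : min ξw (-(2 * a) / (1 + μ)) ≤ -(2 * a) / (1 + μ) := min_le_right _ _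
    have h1' := mul_le_mul_of_nonneg_left h1 h1μ.le
    have h2 : (1 + μ) * (-(2 * a) / (1 + μ)) = -(2 * a) := by field_simp
    rw [hξ₀def]; linarith [h1', h2, h1μ]
  -- the key derivative lower bound
  have hmain : ∀ ξ ≤ ξ₀, 0 ≤ deriv U ξ + C / ξ ^ 2 := by
    intro ξ hξ
    have hξw' : ξ < ξw := lt_of_le_of_lt hξ hξ₀w
    have hξ0 : ξ < 0 := lt_of_le_of_lt hξ hξ₀0
    have hreg' := hreg ξ hξw'
    obtain ⟨s, hs⟩ : ∃ s, s = U ξ - ξ := ⟨_, rfl⟩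
    obtain ⟨t, ht⟩ : ∃ t, t = -ξ := ⟨_, rfl⟩
    have ht0 : 0 < t := by rw [ht]; linarith
    have hst : (1 + μ) * t < s := by rw [ht, hs]; linarith
    have h2a : 2 * a ≤ s := by
      have h4 : -ξ₀ ≤ t := by rw [ht]; linarith
      have h5 := mul_le_mul_of_nonneg_left h4 h1μ.le
      linarith [hξ₀a]
    have hs0 : 0 < s := by linarith
    have h4a : 4 * a^2 ≤ s^2 := by
      have h8 : (2*a) * (2*a) ≤ s * s := mul_le_mul h2a h2a (by positivity) (by linarith)
      linarith [h8]
    have hDs : (3/4) * s^2 ≤ s^2 - a^2 := by linarith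
    have h1 : (1 + μ)^2 * t^2 ≤ s^2 := by
      have h6 := mul_le_mul hst.le hst.le (by positivity) hs0.le
      linarith [h6]
    have hUt : U ξ * t ≤ s^2 / 2 := by
      rw [hs, ht]
      linarith [sq_nonneg (U ξ), sq_nonneg ξ]
    have hP : (0:ℝ) < (1 + μ)^2 := by positivity
    have hP1 : (1 + μ)^2 ≤ 1 := by
      have h7 : μ * (2 + μ) < 0 := mul_neg_of_neg_of_pos hμ0 (by linarith)
      linarith [h7]
    have hCP : C * (1 + μ)^2 = 2 * a^2 * ((m:ℝ) - β) := by
      rw [hCdef]; field_simp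
    have e1 : a^2 * (-β) * ((1 + μ)^2 * t^2) ≤ a^2 * (-β) * s^2 :=
      mul_le_mul_of_nonneg_left h1 (mul_nonneg (sq_nonneg a) (by linarith))
    have e2 : a^2 * (m:ℝ) * (U ξ * t * (1 + μ)^2) ≤ a^2 * (m:ℝ) * (s^2/2) := by
      apply mul_le_mul_of_nonneg_left _ (by positivity)
      have i1 : U ξ * t * (1 + μ)^2 ≤ (s^2/2) * (1 + μ)^2 :=
        mul_le_mul_of_nonneg_right hUt hP.le
      have i2 : (s^2/2) * (1 + μ)^2 ≤ s^2/2 :=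
        mul_le_of_le_one_right (by positivity) hP1
      linarith
    have p1 : 0 ≤ a^2 * (m:ℝ) * s^2 := by positivity
    have p2 : 0 ≤ a^2 * (-β) * s^2 :=
      mul_nonneg (mul_nonneg (sq_nonneg a) (by linarith)) (sq_nonneg s)
    have e3 : a^2 * (-β) * s^2 + a^2 * (m:ℝ) * (s^2/2)
        ≤ (3/2) * a^2 * ((m:ℝ) - β) * s^2 := by linarith
    have step1 : a^2 * (-β * t^2 + (m:ℝ) * (U ξ * t)) * (1 + μ)^2
        ≤ C * ((3/4) * s^2) * (1 + μ)^2 := by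
      have hRHS : C * ((3/4) * s^2) * (1 + μ)^2 = (3/2) * a^2 * ((m:ℝ) - β) * s^2 := by
        linear_combination (3/4) * s^2 * hCP
      rw [hRHS]
      linarith [e1, e2, e3]
    have step2 : a^2 * (-β * t^2 + (m:ℝ) * (U ξ * t)) ≤ C * ((3/4) * s^2) :=
      le_of_mul_le_mul_right step1 hP
    have hkeyineq : a^2 * (-β * t^2 + (m:ℝ) * (U ξ * t)) ≤ C * (s^2 - a^2) :=
      le_trans step2 (mul_le_mul_of_nonneg_left hDs hC0)
    -- conclude
    have hDpos := hD ξ hξw'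
    have hξne : ξ ≠ 0 := ne_of_lt hξ0
    have hNZ : a ^ 2 * (β + (m:ℝ) * U ξ / ξ) * ξ^2
        = -(a^2 * (-β * t^2 + (m:ℝ) * (U ξ * t))) := by
      rw [ht]; field_simp; ring
    have hdle : -C / ξ^2 ≤ deriv U ξ := by
      rw [hderiv_eq ξ hξw', div_le_div_iff₀ (by positivity) hDpos, hNZ]
      have hsq : (U ξ - ξ)^2 = s^2 := by rw [hs]
      rw [hsq]
      linarith [hkeyineq]
    have hne : -C / ξ^2 = -(C / ξ^2) := neg_div _ _
    linarith [hdle]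
  -- auxiliary function h = U - C/ξ is monotone on Iic ξ₀
  obtain ⟨h, hhdef⟩ : ∃ h : ℝ → ℝ, h = fun x => U x - C * x⁻¹ := ⟨_, rfl⟩
  have hdiffh : ∀ x < ξw, x ≠ 0 → DifferentiableAt ℝ h x := by
    intro x hx hx0
    rw [hhdef]
    exact (hdiff x hx).sub ((differentiableAt_inv hx0).const_mul C)
  have hderivh : ∀ x < ξw, x ≠ 0 → deriv h x = deriv U x + C / x^2 := by
    intro x hx hx0
    rw [hhdef, deriv_fun_sub (hdiff x hx) ((differentiableAt_inv hx0).const_mul C),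
      deriv_const_mul C (differentiableAt_inv hx0), deriv_inv]
    field_simp
    ring
  have hmono : MonotoneOn h (Set.Iic ξ₀) := by
    apply monotoneOn_of_deriv_nonneg (convex_Iic ξ₀)
    · intro x hx
      exact ((hdiffh x (lt_of_le_of_lt hx hξ₀w)
        (ne_of_lt (lt_of_le_of_lt hx hξ₀0))).continuousAt).continuousWithinAt
    · rw [interior_Iic]
      intro x hx
      exact (hdiffh x (lt_trans hx hξ₀w)
        (ne_of_lt (lt_trans hx hξ₀0))).differentiableWithinAt
    · rw [interior_Iic]
      intro x hx
      rw [hderivh x (lt_trans hx hξ₀w) (ne_of_lt (lt_trans hx hξ₀0))]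
      exact hmain x (le_of_lt hx)
  have hbound : ∀ x ≤ ξ₀, U x ≤ U ξ₀ - C * ξ₀⁻¹ := by
    intro x hx
    have h1 : h x ≤ h ξ₀ := hmono hx (le_refl ξ₀) hx
    rw [hhdef] at h1
    simp only at h1
    have hx0 : x < 0 := lt_of_le_of_lt hx hξ₀0
    have h2 : x⁻¹ ≤ 0 := inv_nonpos.2 hx0.le
    have h3 : C * x⁻¹ ≤ 0 := mul_nonpos_iff.2 (Or.inl ⟨hC0, h2⟩)
    linarith [h1, h3]
  -- U is antitone on Iic ξ₀
  have hanti : AntitoneOn U (Set.Iic ξ₀) := by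
    apply antitoneOn_of_deriv_nonpos (convex_Iic ξ₀)
    · intro x hx
      exact ((hdiff x (lt_of_le_of_lt hx hξ₀w)).continuousAt).continuousWithinAt
    · rw [interior_Iic]
      intro x hx
      exact (hdiff x (lt_trans hx hξ₀w)).differentiableWithinAt
    · rw [interior_Iic]
      intro x hx
      exact le_of_lt (hderiv_neg x (lt_trans hx hξ₀w))
  -- auxiliary globally antitone bounded function
  obtain ⟨g, hgdef⟩ : ∃ g : ℝ → ℝ, g = fun x => U (min x ξ₀) := ⟨_, rfl⟩
  have hganti : Antitone g := by
    intro x y hxy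
    rw [hgdef]
    exact hanti (min_le_right x ξ₀) (min_le_right y ξ₀) (min_le_min hxy (le_refl ξ₀))
  have hgbdd : BddAbove (Set.range g) := by
    refine ⟨U ξ₀ - C * ξ₀⁻¹, ?_⟩
    rintro _ ⟨x, rfl⟩
    rw [hgdef]
    exact hbound (min x ξ₀) (min_le_right x ξ₀)
  refine ⟨⨆ x, g x, ?_⟩
  have hgt : Filter.Tendsto g Filter.atBot (nhds (⨆ x, g x)) :=
    tendsto_atBot_ciSup hganti hgbdd
  apply hgt.congr'
  filter_upwards [Filter.eventually_le_atBot ξ₀] with x hx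
  rw [hgdef]
  simp [min_eq_left hx]
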